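/- Let α > n ≥ 1 and C₀ > 0. Then the integral ∫_{ℚₚⁿ} ‖ξ‖ₚ^{α-n} exp(-C₀ t ‖ξ‖ₚ^{α-n}) dⁿξ is finite for every t > 0 and is bounded above by C₃ t^{-α/(α-n)} for a constant C₃ > 0 independent of t. -/

import Mathlib

set_option maxHeartbeats 1000000
open MeasureTheory ENNReal


section coord
variable {p : ℕ} [hp : Fact p.Prime]

lemma pQ_ne_zero : ((p : ℚ_[p]) : ℚ_[p]) ≠ 0 :=
  Nat.cast_ne_zero.mpr hp.out.ne_zero

lemma pR_pos : (0:ℝ) < (p:ℝ) := by exact_mod_cast hp.out.pos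

lemma pR_one_lt : (1:ℝ) < (p:ℝ) := by exact_mod_cast hp.out.one_lt

lemma coord_exists (k : ℤ) (a : ℚ_[p]) (ha : ‖a‖ ≤ (p:ℝ)^k) :
    ∃ v : Fin p, ‖a - (p:ℚ_[p])^(-k) * ((v : ℕ) : ℚ_[p])‖ ≤ (p:ℝ)^(k-1) := by
  have hp0 : ((p:ℚ_[p])) ≠ 0 := pQ_ne_zero
  have hpR : (0:ℝ) < (p:ℝ) := pR_pos
  set y : ℚ_[p] := (p:ℚ_[p])^k * a with hy_def
  have hy : ‖y‖ ≤ 1 := by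
    rw [hy_def, norm_mul, Padic.norm_p_zpow]
    calc (p:ℝ)^(-k) * ‖a‖ ≤ (p:ℝ)^(-k) * (p:ℝ)^k := by
          exact mul_le_mul_of_nonneg_left ha (zpow_nonneg hpR.le _)
      _ = 1 := by rw [← zpow_add₀ hpR.ne', neg_add_cancel, zpow_zero]
  set z : ℤ_[p] := ⟨y, hy⟩ with hz_def
  have hNlt : z.appr 1 < p := by simpa using z.appr_lt 1
  refine ⟨⟨z.appr 1, hNlt⟩, ?_⟩
  have hspan : ‖z - (z.appr 1 : ℤ_[p])‖ ≤ (p:ℝ)^(-(1:ℕ) : ℤ) := by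
    rw [PadicInt.norm_le_pow_iff_mem_span_pow]
    simpa using z.appr_spec 1
  have hsub : ‖y - ((z.appr 1 : ℕ) : ℚ_[p])‖ ≤ (p:ℝ)^(-1 : ℤ) := by
    have : ((z - (z.appr 1 : ℤ_[p]) : ℤ_[p]) : ℚ_[p]) = y - ((z.appr 1 : ℕ) : ℚ_[p]) := by
      push_cast [hz_def]
      rfl
    rw [PadicInt.norm_def, this] at hspan
    simpa using hspan
  have key : a - (p:ℚ_[p])^(-k) * ((z.appr 1 : ℕ) : ℚ_[p])
      = (p:ℚ_[p])^(-k) * (y - ((z.appr 1 : ℕ) : ℚ_[p])) := by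
    rw [mul_sub, hy_def, ← mul_assoc, ← zpow_add₀ hp0, neg_add_cancel, zpow_zero, one_mul]
  rw [key, norm_mul, Padic.norm_p_zpow, neg_neg]
  calc (p:ℝ)^k * ‖y - ((z.appr 1 : ℕ) : ℚ_[p])‖ ≤ (p:ℝ)^k * (p:ℝ)^(-1:ℤ) :=
        mul_le_mul_of_nonneg_left hsub (zpow_nonneg hpR.le _)
    _ = (p:ℝ)^(k-1) := by rw [sub_eq_add_neg, zpow_add₀ hpR.ne']

lemma coord_unique (k : ℤ) (v w : Fin p)
    (h : ‖(p:ℚ_[p])^(-k) * ((v : ℕ) : ℚ_[p]) - (p:ℚ_[p])^(-k) * ((w : ℕ) : ℚ_[p])‖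
      ≤ (p:ℝ)^(k-1)) : v = w := by
  have hpR : (0:ℝ) < (p:ℝ) := pR_pos
  rw [← mul_sub, norm_mul, Padic.norm_p_zpow, neg_neg] at h
  have h2 : ‖((v : ℕ) : ℚ_[p]) - ((w : ℕ) : ℚ_[p])‖ ≤ (p:ℝ)^(-1:ℤ) := by
    have hk : (p:ℝ)^(k-1) = (p:ℝ)^k * (p:ℝ)^(-1:ℤ) := by
      rw [sub_eq_add_neg, zpow_add₀ hpR.ne']
    rw [hk] at h
    exact (mul_le_mul_iff_right₀ (zpow_pos hpR k)).mp h
  set d : ℤ := ((v : ℕ) : ℤ) - ((w : ℕ) : ℤ) with hd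
  have hlt1 : ‖(d : ℚ_[p])‖ < 1 := by
    rw [hd]
    push_cast
    calc ‖((v : ℕ) : ℚ_[p]) - ((w : ℕ) : ℚ_[p])‖ ≤ (p:ℝ)^(-1:ℤ) := h2
      _ < 1 := by
        rw [zpow_neg_one]
        exact inv_lt_one_of_one_lt₀ pR_one_lt
  have hdvd : (p : ℤ) ∣ d := (Padic.norm_intCast_lt_one_iff).mp hlt1
  have habs : |d| < p := by
    have hv := v.2; have hw := w.2
    rw [hd, abs_lt]; omega
  have h0 := Int.eq_zero_of_abs_lt_dvd hdvd (by exact_mod_cast habs)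
  have : (v : ℕ) = (w : ℕ) := by omega
  exact Fin.ext this

end coord


section ball
variable {p : ℕ} [hp : Fact p.Prime] {n : ℕ}
  [MeasurableSpace (Fin n → ℚ_[p])] [BorelSpace (Fin n → ℚ_[p])]
  (μ : Measure (Fin n → ℚ_[p])) [μ.IsAddHaarMeasure]

lemma ball_succ (k : ℤ) :
    μ (Metric.closedBall (0 : Fin n → ℚ_[p]) ((p:ℝ)^k))
      = (p:ℝ≥0∞)^(n:ℕ) * μ (Metric.closedBall (0 : Fin n → ℚ_[p]) ((p:ℝ)^(k-1))) := by
  have hpR : (0:ℝ) < (p:ℝ) := pR_pos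
  set cvec : (Fin n → Fin p) → (Fin n → ℚ_[p]) :=
    fun v i => (p:ℚ_[p])^(-k) * ((v i : ℕ) : ℚ_[p]) with hcvec
  set C : (Fin n → Fin p) → Set (Fin n → ℚ_[p]) :=
    fun v => (fun x => -(cvec v) + x) ⁻¹' (Metric.closedBall 0 ((p:ℝ)^(k-1))) with hC
  have hmem : ∀ v x, x ∈ C v ↔ ∀ i, ‖x i - cvec v i‖ ≤ (p:ℝ)^(k-1) := by
    intro v x
    rw [hC]
    simp only [Set.mem_preimage, Metric.mem_closedBall, dist_zero_right]
    rw [pi_norm_le_iff_of_nonneg (zpow_nonneg hpR.le _)]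
    constructor
    · intro h i; have := h i; simpa [neg_add_eq_sub] using this
    · intro h i; simpa [neg_add_eq_sub] using h i
  have hunion : Metric.closedBall (0 : Fin n → ℚ_[p]) ((p:ℝ)^k) = ⋃ v, C v := by
    ext x
    simp only [Metric.mem_closedBall, dist_zero_right, Set.mem_iUnion]
    rw [pi_norm_le_iff_of_nonneg (zpow_nonneg hpR.le _)]
    constructor
    · intro hx
      choose v hv using fun i => coord_exists k (x i) (hx i)
      exact ⟨v, (hmem v x).mpr hv⟩
    · rintro ⟨v, hv⟩ i
      rw [hmem] at hv
      have h1 : ‖x i - cvec v i‖ ≤ (p:ℝ)^(k-1) := hv i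
      have h2 : ‖cvec v i‖ ≤ (p:ℝ)^k := by
        rw [hcvec]
        simp only [norm_mul, Padic.norm_p_zpow, neg_neg]
        calc (p:ℝ)^k * ‖((v i : ℕ) : ℚ_[p])‖ ≤ (p:ℝ)^k * 1 := by
              refine mul_le_mul_of_nonneg_left ?_ (zpow_nonneg hpR.le _)
              exact_mod_cast Padic.norm_int_le_one ((v i : ℕ) : ℤ)
          _ = (p:ℝ)^k := mul_one _
      calc ‖x i‖ = ‖(x i - cvec v i) + cvec v i‖ := by ring_nf
        _ ≤ max ‖x i - cvec v i‖ ‖cvec v i‖ := Padic.nonarchimedean _ _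
        _ ≤ (p:ℝ)^k := max_le (h1.trans (zpow_le_zpow_right₀ pR_one_lt.le (by omega))) h2
  have hdisj : Pairwise (Function.onFun Disjoint C) := by
    intro v w hvw
    rw [Function.onFun]
    rw [Set.disjoint_left]
    intro x hxv hxw
    apply hvw
    funext i
    apply coord_unique k (v i) (w i)
    have h1 := (hmem v x).mp hxv i
    have h2 := (hmem w x).mp hxw i
    have he : (p:ℚ_[p])^(-k) * ((v i : ℕ) : ℚ_[p]) - (p:ℚ_[p])^(-k) * ((w i : ℕ) : ℚ_[p])
        = (x i - cvec w i) - (x i - cvec v i) := by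
      simp only [hcvec]; ring
    rw [he]
    calc ‖(x i - cvec w i) - (x i - cvec v i)‖
        = ‖(x i - cvec w i) + (-(x i - cvec v i))‖ := by rw [sub_eq_add_neg]
      _ ≤ max ‖x i - cvec w i‖ ‖-(x i - cvec v i)‖ := Padic.nonarchimedean _ _
      _ ≤ (p:ℝ)^(k-1) := by rw [norm_neg]; exact max_le h2 h1
  have hmeasC : ∀ v, MeasurableSet (C v) := fun v =>
    measurableSet_closedBall.preimage (measurable_const_add _)
  rw [hunion, measure_iUnion hdisj hmeasC]
  have hCval : ∀ v, μ (C v) = μ (Metric.closedBall (0 : Fin n → ℚ_[p]) ((p:ℝ)^(k-1))) :=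
    fun v => measure_preimage_add μ _ _
  rw [tsum_congr hCval, tsum_fintype, Finset.sum_const]
  simp only [Finset.card_univ]
  rw [Fintype.card_fun]
  simp only [Fintype.card_fin, nsmul_eq_mul, Nat.cast_pow]

lemma ball_measure (hμ : μ (Metric.closedBall (0 : Fin n → ℚ_[p]) 1) = 1) (k : ℤ) :
    μ (Metric.closedBall (0 : Fin n → ℚ_[p]) ((p:ℝ)^k))
      = ENNReal.ofReal ((p:ℝ)^((n:ℤ) * k)) := by
  have hpR : (0:ℝ) < (p:ℝ) := pR_pos
  have hofp : ((p:ℝ≥0∞))^(n:ℕ) = ENNReal.ofReal ((p:ℝ)^(n:ℕ)) := by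
    rw [ENNReal.ofReal_pow hpR.le, ENNReal.ofReal_natCast]
  induction k using Int.induction_on with
  | zero => simpa using hμ
  | succ k ih =>
      have h := ball_succ μ (k+1)
      rw [show ((k:ℤ)+1-1) = (k:ℤ) from by ring] at h
      rw [h, ih, hofp, ← ENNReal.ofReal_mul (by positivity)]
      congr 1
      rw [← zpow_natCast (p:ℝ) n, ← zpow_add₀ hpR.ne']
      congr 1
      ring
  | pred k ih =>
      have h := ball_succ μ (-k)
      rw [ih] at h
      have hne : ((p:ℝ≥0∞))^(n:ℕ) ≠ 0 :=
        pow_ne_zero _ (by exact_mod_cast Nat.cast_ne_zero.mpr hp.out.ne_zero)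
      have htop : ((p:ℝ≥0∞))^(n:ℕ) ≠ ⊤ :=
        ENNReal.pow_ne_top (ENNReal.natCast_ne_top p)
      have hthis : μ (Metric.closedBall (0 : Fin n → ℚ_[p]) ((p:ℝ)^((-k:ℤ)-1)))
          = ((p:ℝ≥0∞)^(n:ℕ))⁻¹ * ENNReal.ofReal ((p:ℝ)^((n:ℤ) * (-k))) := by
        rw [h, ← mul_assoc, ENNReal.inv_mul_cancel hne htop, one_mul]
      rw [show ((-(k:ℤ)-1) : ℤ) = ((-k:ℤ)-1) from by ring, hthis, hofp,
        ← ENNReal.ofReal_inv_of_pos (by positivity), ← ENNReal.ofReal_mul (by positivity)]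
      congr 1
      rw [← zpow_natCast (p:ℝ) n, ← zpow_neg, ← zpow_add₀ hpR.ne']
      congr 1
      ring

end ball

lemma exp_neg_le_factorial_div (M : ℕ) {y : ℝ} (hy : 0 < y) :
    Real.exp (-y) ≤ (M.factorial : ℝ) / y ^ M := by
  have h1 : y ^ M / (M.factorial : ℝ) ≤ Real.exp y := by
    have h2 := Real.sum_le_exp_of_nonneg hy.le (M + 1)
    have h3 : y ^ M / (M.factorial : ℝ)
        ≤ ∑ i ∈ Finset.range (M + 1), y ^ i / (i.factorial : ℝ) :=
      Finset.single_le_sum (f := fun i => y ^ i / (i.factorial : ℝ))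
        (fun i _ => by positivity) (Finset.self_mem_range_succ M)
    linarith
  have hyM : (0:ℝ) < y ^ M / (M.factorial : ℝ) := by positivity
  rw [Real.exp_neg]
  calc (Real.exp y)⁻¹ ≤ (y ^ M / (M.factorial : ℝ))⁻¹ := by
        exact inv_anti₀ hyM h1
    _ = (M.factorial : ℝ) / y ^ M := by field_simp

/-- the integral `∫ ‖ξ‖^(α−n) exp(−C₀ t ‖ξ‖^(α−n)) dξ` is finite and
is `O(t^(−α/(α−n)))`. -/
theorem stmt2 {p : ℕ} [Fact p.Prime] {n : ℕ} (hn : 1 ≤ n)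
    [MeasurableSpace (Fin n → ℚ_[p])] [BorelSpace (Fin n → ℚ_[p])]
    (μ : Measure (Fin n → ℚ_[p])) [μ.IsAddHaarMeasure]
    (hμ : μ (Metric.closedBall 0 1) = 1)
    (α : ℝ) (hα : (n : ℝ) < α) (C₀ : ℝ) (hC₀ : 0 < C₀) :
    ∃ C₃ > (0 : ℝ), ∀ t : ℝ, 0 < t →
      Integrable (fun ξ : Fin n → ℚ_[p] =>
        ‖ξ‖ ^ (α - n) * Real.exp (-C₀ * t * ‖ξ‖ ^ (α - n))) μ ∧
      (∫ ξ : Fin n → ℚ_[p], ‖ξ‖ ^ (α - n) * Real.exp (-C₀ * t * ‖ξ‖ ^ (α - n)) ∂μ) ≤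
        C₃ * t ^ (-α / (α - n)) := by
  have hpR : (0:ℝ) < (p:ℝ) := pR_pos
  have hp1 : (1:ℝ) < (p:ℝ) := pR_one_lt
  set β : ℝ := α - n with hβdef
  have hβ : 0 < β := sub_pos.mpr hα
  have hα0 : 0 < α := by
    have : (1:ℝ) ≤ (n:ℝ) := by exact_mod_cast hn
    linarith
  set M : ℕ := ⌈α / β⌉₊ + 1 with hM
  have hMβ : α < (M:ℝ) * β := by
    have h1 : α / β < (M:ℕ) := by
      have h2 := Nat.le_ceil (α / β)
      have : ((⌈α / β⌉₊ : ℝ)) < (M:ℕ) := by rw [hM]; push_cast; linarith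
      linarith
    calc α = (α / β) * β := by field_simp
      _ < (M:ℝ) * β := mul_lt_mul_of_pos_right h1 hβ
  set r : ℝ := (p:ℝ) ^ (α - M * β) with hr
  have hr0 : 0 < r := Real.rpow_pos_of_pos hpR _
  have hr1 : r < 1 := Real.rpow_lt_one_of_one_lt_of_neg hp1 (by linarith)
  set c : ℕ → ℝ := fun j => (p:ℝ) ^ (((j:ℝ)+1) * α) * Real.exp (-(C₀ * (p:ℝ) ^ ((j:ℝ) * β)))
    with hc
  have hcpos : ∀ j, 0 ≤ c j := fun j => by
    rw [hc]
    positivity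
  set D : ℝ := (p:ℝ) ^ α * ((M.factorial : ℝ) / C₀ ^ M) with hD
  have hcle : ∀ j, c j ≤ D * r ^ j := by
    intro j
    have hy : (0:ℝ) < C₀ * (p:ℝ) ^ ((j:ℝ) * β) := by positivity
    have hexp := exp_neg_le_factorial_div M hy
    have hppos : (0:ℝ) < (p:ℝ) ^ (((j:ℝ)+1) * α) := Real.rpow_pos_of_pos hpR _
    have step1 : c j ≤ (p:ℝ) ^ (((j:ℝ)+1) * α) *
        ((M.factorial : ℝ) / (C₀ * (p:ℝ) ^ ((j:ℝ) * β)) ^ M) := by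
      rw [hc]
      exact mul_le_mul_of_nonneg_left hexp hppos.le
    have step2 : (p:ℝ) ^ (((j:ℝ)+1) * α) *
        ((M.factorial : ℝ) / (C₀ * (p:ℝ) ^ ((j:ℝ) * β)) ^ M) = D * r ^ j := by
      rw [hD, hr, mul_pow, ← Real.rpow_natCast ((p:ℝ) ^ ((j:ℝ) * β)) M,
        ← Real.rpow_mul hpR.le, ← Real.rpow_natCast ((p:ℝ) ^ (α - M * β)) j,
        ← Real.rpow_mul hpR.le]
      rw [div_eq_mul_inv, mul_inv, div_eq_mul_inv]
      rw [← Real.rpow_neg hpR.le ((j:ℝ) * β * M)]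
      rw [show ((p:ℝ) ^ α * ((M.factorial:ℝ) * (C₀ ^ M)⁻¹) * (p:ℝ) ^ ((α - ↑M * β) * ↑j))
          = ((M.factorial:ℝ) * (C₀ ^ M)⁻¹) * ((p:ℝ) ^ α * (p:ℝ) ^ ((α - ↑M * β) * ↑j))
          from by ring]
      rw [← Real.rpow_add hpR]
      rw [show ((p:ℝ) ^ (((j:ℝ)+1) * α) * ((M.factorial:ℝ) * ((C₀ ^ M)⁻¹ * (p:ℝ) ^ (-((j:ℝ) * β * M)))))
          = ((M.factorial:ℝ) * (C₀ ^ M)⁻¹) * ((p:ℝ) ^ (((j:ℝ)+1) * α) * (p:ℝ) ^ (-((j:ℝ) * β * M)))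
          from by ring]
      rw [← Real.rpow_add hpR]
      congr 2
      ring
    linarith [step1, step2.le]
  have hsum_geom : Summable (fun j : ℕ => D * r ^ j) :=
    (summable_geometric_of_lt_one hr0.le hr1).mul_left D
  have hsum : Summable c := Summable.of_nonneg_of_le hcpos hcle hsum_geom
  set K : ℝ := ∑' j, c j with hK
  have hK0 : 0 ≤ K := tsum_nonneg hcpos
  refine ⟨(p:ℝ) ^ α * (1 + K), by positivity, ?_⟩
  intro t ht
  -- the function
  set g : (Fin n → ℚ_[p]) → ℝ := fun ξ => ‖ξ‖ ^ β * Real.exp (-C₀ * t * ‖ξ‖ ^ β) with hg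
  have hg0 : ∀ ξ, 0 ≤ g ξ := fun ξ => by
    rw [hg]
    positivity
  have hgcont : Continuous g := by
    rw [hg]
    have h1 : Continuous fun ξ : Fin n → ℚ_[p] => ‖ξ‖ ^ β :=
      continuous_norm.rpow_const (fun ξ => Or.inr hβ.le)
    exact h1.mul (Real.continuous_exp.comp (continuous_const.mul h1))
  -- choice of m
  set x : ℝ := t ^ (-1/β) with hx
  have hx0 : 0 < x := Real.rpow_pos_of_pos ht _
  set m : ℤ := ⌈Real.logb p x⌉ with hm
  have hxm : x ≤ (p:ℝ) ^ (m:ℝ) := by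
    conv_lhs => rw [← Real.rpow_logb hpR hp1.ne' hx0]
    exact Real.rpow_le_rpow_of_exponent_le hp1.le (Int.le_ceil _)
  have hxm' : (p:ℝ) ^ ((m:ℝ) - 1) ≤ x := by
    conv_rhs => rw [← Real.rpow_logb hpR hp1.ne' hx0]
    refine Real.rpow_le_rpow_of_exponent_le hp1.le ?_
    have := Int.ceil_lt_add_one (Real.logb p x)
    rw [← hm] at this
    linarith
  have hxβ : x ^ (-β) = t := by
    rw [hx, ← Real.rpow_mul ht.le]
    rw [show (-1/β) * (-β) = 1 from by field_simp]
    exact Real.rpow_one t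
  have ht_low : (p:ℝ) ^ ((m:ℝ) * (-β)) ≤ t := by
    rw [← hxβ, Real.rpow_mul hpR.le]
    exact Real.rpow_le_rpow_of_nonpos hx0 hxm (neg_nonpos.mpr hβ.le)
  have hpmα : (p:ℝ) ^ ((m:ℝ) * α) ≤ (p:ℝ) ^ α * t ^ (-α/β) := by
    have h1 : (p:ℝ) ^ (m:ℝ) ≤ (p:ℝ) * x := by
      calc (p:ℝ) ^ (m:ℝ) = (p:ℝ) ^ (1 + ((m:ℝ) - 1)) := by ring_nf
        _ = (p:ℝ) * (p:ℝ) ^ ((m:ℝ) - 1) := by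
            rw [Real.rpow_add hpR, Real.rpow_one]
        _ ≤ (p:ℝ) * x := mul_le_mul_of_nonneg_left hxm' hpR.le
    calc (p:ℝ) ^ ((m:ℝ) * α) = ((p:ℝ) ^ (m:ℝ)) ^ α := Real.rpow_mul hpR.le _ _
      _ ≤ ((p:ℝ) * x) ^ α := by
          exact Real.rpow_le_rpow (Real.rpow_nonneg hpR.le _) h1 hα0.le
      _ = (p:ℝ) ^ α * x ^ α := Real.mul_rpow hpR.le hx0.le
      _ = (p:ℝ) ^ α * t ^ (-α/β) := by
          rw [hx, ← Real.rpow_mul ht.le]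
          congr 1
          field_simp
  -- balls and their measures
  set B : ℤ → Set (Fin n → ℚ_[p]) := fun k => Metric.closedBall 0 ((p:ℝ)^k) with hB
  have hBmeas : ∀ k, MeasurableSet (B k) := fun k => measurableSet_closedBall
  have hBμ : ∀ k : ℤ, μ (B k) = ENNReal.ofReal ((p:ℝ) ^ ((n:ℤ) * k)) :=
    fun k => ball_measure μ hμ k
  have hBμ' : ∀ k : ℤ, μ (B k) = ENNReal.ofReal ((p:ℝ) ^ ((n:ℝ) * (k:ℝ))) := by
    intro k
    rw [hBμ k]
    congr 1
    rw [← Real.rpow_intCast (p:ℝ) ((n:ℤ) * k)]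
    congr 1
    push_cast
    ring
  -- shells
  set S : ℕ → Set (Fin n → ℚ_[p]) :=
    fun j => Nat.casesOn j (B m) (fun i => B (m + i + 1) \ B (m + i)) with hS
  have hSmeas : ∀ j, MeasurableSet (S j) := by
    intro j
    cases j with
    | zero => exact hBmeas m
    | succ i => exact (hBmeas _).diff (hBmeas _)
  have hcover : (Set.univ : Set (Fin n → ℚ_[p])) = ⋃ j, S j := by
    refine Set.eq_of_subset_of_subset ?_ (Set.subset_univ _)
    intro ξ _
    classical
    have hex : ∃ j : ℕ, ‖ξ‖ ≤ (p:ℝ) ^ (m + (j:ℤ)) := by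
      obtain ⟨N, hN⟩ := exists_nat_ge (‖ξ‖ * (p:ℝ) ^ (-m))
      refine ⟨N, ?_⟩
      have hpm : (0:ℝ) < (p:ℝ) ^ (m:ℤ) := zpow_pos hpR m
      have h2 : ‖ξ‖ ≤ (N:ℝ) * (p:ℝ) ^ (m:ℤ) := by
        have h3 := mul_le_mul_of_nonneg_right hN hpm.le
        rwa [mul_assoc, ← zpow_add₀ hpR.ne', neg_add_cancel, zpow_zero, mul_one] at h3
      have h3 : (N:ℝ) ≤ (p:ℝ) ^ (N:ℤ) := by
        have h4 : N < p ^ N := Nat.lt_pow_self (n := N) (Fact.out (p := p.Prime)).one_lt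
        calc (N:ℝ) ≤ ((p ^ N : ℕ) : ℝ) := by exact_mod_cast h4.le
          _ = (p:ℝ) ^ (N:ℤ) := by push_cast; rw [zpow_natCast]
      calc ‖ξ‖ ≤ (N:ℝ) * (p:ℝ) ^ (m:ℤ) := h2
        _ ≤ (p:ℝ) ^ (N:ℤ) * (p:ℝ) ^ (m:ℤ) := mul_le_mul_of_nonneg_right h3 hpm.le
        _ = (p:ℝ) ^ (m + (N:ℤ)) := by rw [← zpow_add₀ hpR.ne', add_comm]
    by_cases h0 : Nat.find hex = 0
    · refine Set.mem_iUnion.mpr ⟨0, ?_⟩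
      show ξ ∈ B m
      have hsp := Nat.find_spec hex
      rw [h0] at hsp
      simp only [hB, Metric.mem_closedBall, dist_zero_right]
      simpa using hsp
    · obtain ⟨j, hj⟩ := Nat.exists_eq_succ_of_ne_zero h0
      refine Set.mem_iUnion.mpr ⟨j+1, ?_⟩
      show ξ ∈ B (m + j + 1) \ B (m + j)
      constructor
      · have hsp := Nat.find_spec hex
        rw [hj] at hsp
        simp only [hB, Metric.mem_closedBall, dist_zero_right]
        have hcst : (m + ((j+1 : ℕ) : ℤ)) = m + j + 1 := by push_cast; ring
        rwa [hcst] at hsp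
      · intro hmem
        have hmin := Nat.find_min hex (by omega : j < Nat.find hex)
        apply hmin
        simp only [hB, Metric.mem_closedBall, dist_zero_right] at hmem
        exact hmem
  -- pointwise bounds
  have hbound0 : ∀ ξ ∈ S 0, g ξ ≤ (p:ℝ) ^ ((m:ℝ) * β) := by
    intro ξ hξ
    have hξ' : ‖ξ‖ ≤ (p:ℝ) ^ (m:ℤ) := by
      have h := (show ξ ∈ Metric.closedBall (0 : Fin n → ℚ_[p]) ((p:ℝ)^(m:ℤ)) from hξ)
      rwa [Metric.mem_closedBall, dist_zero_right] at h
    have ha : ‖ξ‖ ^ β ≤ (p:ℝ) ^ ((m:ℝ) * β) := by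
      calc ‖ξ‖ ^ β ≤ ((p:ℝ) ^ (m:ℤ)) ^ β :=
            Real.rpow_le_rpow (norm_nonneg ξ) hξ' hβ.le
        _ = (p:ℝ) ^ ((m:ℝ) * β) := by
            rw [← Real.rpow_intCast (p:ℝ) m, ← Real.rpow_mul hpR.le]
    have hexp1 : Real.exp (-C₀ * t * ‖ξ‖ ^ β) ≤ 1 := by
      rw [Real.exp_le_one_iff]
      have h5 : 0 ≤ ‖ξ‖ ^ β := Real.rpow_nonneg (norm_nonneg ξ) β
      have h6 := mul_nonneg (mul_nonneg hC₀.le ht.le) h5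
      nlinarith
    calc g ξ = ‖ξ‖ ^ β * Real.exp (-C₀ * t * ‖ξ‖ ^ β) := by rw [hg]
      _ ≤ ‖ξ‖ ^ β * 1 := by
          exact mul_le_mul_of_nonneg_left hexp1 (Real.rpow_nonneg (norm_nonneg ξ) β)
      _ = ‖ξ‖ ^ β := mul_one _
      _ ≤ (p:ℝ) ^ ((m:ℝ) * β) := ha
  have hboundj : ∀ (j : ℕ), ∀ ξ ∈ S (j+1),
      g ξ ≤ (p:ℝ) ^ (((m:ℝ) + j + 1) * β) * Real.exp (-(C₀ * (p:ℝ) ^ ((j:ℝ) * β))) := by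
    intro j ξ hξ
    have hξd : ξ ∈ B (m + j + 1) \ B (m + j) := hξ
    obtain ⟨hξ1', hξ2⟩ := hξd
    have hξ1 : ‖ξ‖ ≤ (p:ℝ) ^ ((m + j + 1 : ℤ)) := by
      have h := hξ1'
      simp only [hB, Metric.mem_closedBall, dist_zero_right] at h
      exact h
    have hξ2' : (p:ℝ) ^ ((m + j : ℤ)) < ‖ξ‖ := by
      by_contra hcon
      push_neg at hcon
      exact hξ2 (by simp only [hB, Metric.mem_closedBall, dist_zero_right]; exact hcon)
    have ha1 : ‖ξ‖ ^ β ≤ (p:ℝ) ^ (((m:ℝ) + j + 1) * β) := by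
      calc ‖ξ‖ ^ β ≤ ((p:ℝ) ^ ((m + j + 1 : ℤ))) ^ β :=
            Real.rpow_le_rpow (norm_nonneg ξ) hξ1 hβ.le
        _ = (p:ℝ) ^ (((m:ℝ) + j + 1) * β) := by
            rw [← Real.rpow_intCast (p:ℝ) (m + j + 1), ← Real.rpow_mul hpR.le]
            congr 1
            push_cast
            ring
    have ha2 : (p:ℝ) ^ (((m:ℝ) + j) * β) ≤ ‖ξ‖ ^ β := by
      calc (p:ℝ) ^ (((m:ℝ) + j) * β) = ((p:ℝ) ^ ((m + j : ℤ))) ^ β := by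
            rw [← Real.rpow_intCast (p:ℝ) (m + j), ← Real.rpow_mul hpR.le]
            congr 1
            push_cast
            ring
        _ ≤ ‖ξ‖ ^ β := Real.rpow_le_rpow (zpow_pos hpR _).le hξ2'.le hβ.le
    have hE : -C₀ * t * ‖ξ‖ ^ β ≤ -(C₀ * (p:ℝ) ^ ((j:ℝ) * β)) := by
      have hstep : (p:ℝ) ^ ((j:ℝ) * β) ≤ t * ‖ξ‖ ^ β := by
        calc (p:ℝ) ^ ((j:ℝ) * β)
            = (p:ℝ) ^ ((m:ℝ) * (-β)) * (p:ℝ) ^ (((m:ℝ) + j) * β) := by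
              rw [← Real.rpow_add hpR]
              congr 1
              ring
          _ ≤ t * ‖ξ‖ ^ β := by
              refine mul_le_mul ht_low ha2 (Real.rpow_pos_of_pos hpR _).le ht.le
      nlinarith [hstep]
    calc g ξ = ‖ξ‖ ^ β * Real.exp (-C₀ * t * ‖ξ‖ ^ β) := by rw [hg]
      _ ≤ (p:ℝ) ^ (((m:ℝ) + j + 1) * β) * Real.exp (-(C₀ * (p:ℝ) ^ ((j:ℝ) * β))) := by
          refine mul_le_mul ha1 (Real.exp_le_exp.mpr hE) (Real.exp_nonneg _)
            (Real.rpow_pos_of_pos hpR _).le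
  -- the main lintegral bound
  set T : ℕ → ℝ≥0∞ := fun j =>
    Nat.casesOn j (ENNReal.ofReal ((p:ℝ) ^ ((m:ℝ) * α)))
      (fun i => ENNReal.ofReal ((p:ℝ) ^ ((m:ℝ) * α) * c i)) with hT
  have hterm : ∀ j, ∫⁻ ξ in S j, ENNReal.ofReal (g ξ) ∂μ ≤ T j := by
    intro j
    cases j with
    | zero =>
        calc ∫⁻ ξ in S 0, ENNReal.ofReal (g ξ) ∂μ
            ≤ ∫⁻ _ in S 0, ENNReal.ofReal ((p:ℝ) ^ ((m:ℝ) * β)) ∂μ :=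
              setLIntegral_mono' (hSmeas 0)
                (fun ξ hξ => ENNReal.ofReal_le_ofReal (hbound0 ξ hξ))
          _ = ENNReal.ofReal ((p:ℝ) ^ ((m:ℝ) * β)) * μ (S 0) := setLIntegral_const _ _
          _ = ENNReal.ofReal ((p:ℝ) ^ ((m:ℝ) * β)) *
                ENNReal.ofReal ((p:ℝ) ^ ((n:ℝ) * (m:ℝ))) := by
              rw [show S 0 = B m from rfl, hBμ' m]
          _ = T 0 := by
              rw [← ENNReal.ofReal_mul (Real.rpow_pos_of_pos hpR _).le,
                ← Real.rpow_add hpR]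
              show ENNReal.ofReal ((p:ℝ) ^ ((m:ℝ) * β + (n:ℝ) * (m:ℝ)))
                = ENNReal.ofReal ((p:ℝ) ^ ((m:ℝ) * α))
              congr 1
              rw [hβdef]
              ring
    | succ i =>
        calc ∫⁻ ξ in S (i+1), ENNReal.ofReal (g ξ) ∂μ
            ≤ ∫⁻ _ in S (i+1), ENNReal.ofReal
                ((p:ℝ) ^ (((m:ℝ) + i + 1) * β) *
                  Real.exp (-(C₀ * (p:ℝ) ^ ((i:ℝ) * β)))) ∂μ :=
              setLIntegral_mono' (hSmeas (i+1))
                (fun ξ hξ => ENNReal.ofReal_le_ofReal (hboundj i ξ hξ))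
          _ = ENNReal.ofReal ((p:ℝ) ^ (((m:ℝ) + i + 1) * β) *
                Real.exp (-(C₀ * (p:ℝ) ^ ((i:ℝ) * β)))) * μ (S (i+1)) :=
              setLIntegral_const _ _
          _ ≤ ENNReal.ofReal ((p:ℝ) ^ (((m:ℝ) + i + 1) * β) *
                Real.exp (-(C₀ * (p:ℝ) ^ ((i:ℝ) * β)))) * μ (B (m + i + 1)) := by
              exact mul_le_mul_right (measure_mono Set.diff_subset) _
          _ = T (i+1) := by
              rw [hBμ' (m + i + 1)]
              rw [← ENNReal.ofReal_mul (by positivity)]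
              show ENNReal.ofReal ((p:ℝ) ^ (((m:ℝ) + i + 1) * β) *
                  Real.exp (-(C₀ * (p:ℝ) ^ ((i:ℝ) * β))) *
                  (p:ℝ) ^ ((n:ℝ) * ((m + i + 1 : ℤ) : ℝ)))
                = ENNReal.ofReal ((p:ℝ) ^ ((m:ℝ) * α) * c i)
              congr 1
              rw [hc]
              show (p:ℝ) ^ (((m:ℝ) + i + 1) * β) *
                  Real.exp (-(C₀ * (p:ℝ) ^ ((i:ℝ) * β))) *
                  (p:ℝ) ^ ((n:ℝ) * ((m + i + 1 : ℤ) : ℝ))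
                = (p:ℝ) ^ ((m:ℝ) * α) *
                  ((p:ℝ) ^ (((i:ℝ) + 1) * α) * Real.exp (-(C₀ * (p:ℝ) ^ ((i:ℝ) * β))))
              have hcast : ((m + i + 1 : ℤ) : ℝ) = (m:ℝ) + i + 1 := by push_cast; ring
              rw [hcast]
              rw [show (p:ℝ) ^ ((m:ℝ) * α) * ((p:ℝ) ^ (((i:ℝ) + 1) * α) *
                    Real.exp (-(C₀ * (p:ℝ) ^ ((i:ℝ) * β))))
                  = ((p:ℝ) ^ ((m:ℝ) * α) * (p:ℝ) ^ (((i:ℝ) + 1) * α)) *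
                    Real.exp (-(C₀ * (p:ℝ) ^ ((i:ℝ) * β))) from by ring]
              rw [show (p:ℝ) ^ (((m:ℝ) + i + 1) * β) *
                    Real.exp (-(C₀ * (p:ℝ) ^ ((i:ℝ) * β))) *
                    (p:ℝ) ^ ((n:ℝ) * ((m:ℝ) + i + 1))
                  = ((p:ℝ) ^ (((m:ℝ) + i + 1) * β) * (p:ℝ) ^ ((n:ℝ) * ((m:ℝ) + i + 1))) *
                    Real.exp (-(C₀ * (p:ℝ) ^ ((i:ℝ) * β))) from by ring]
              congr 1
              rw [← Real.rpow_add hpR, ← Real.rpow_add hpR]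
              congr 1
              rw [hβdef]
              ring
  have hGle : ∫⁻ ξ, ENNReal.ofReal (g ξ) ∂μ ≤
      ENNReal.ofReal ((p:ℝ) ^ ((m:ℝ) * α) * (1 + K)) := by
    have h0 : ∫⁻ ξ, ENNReal.ofReal (g ξ) ∂μ
        = ∫⁻ ξ in ⋃ j, S j, ENNReal.ofReal (g ξ) ∂μ := by
      rw [← hcover, Measure.restrict_univ]
    rw [h0]
    refine le_trans (lintegral_iUnion_le _ _) ?_
    refine le_trans (ENNReal.tsum_le_tsum hterm) ?_
    rw [tsum_eq_zero_add' ENNReal.summable]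
    have h1 : ∑' (i : ℕ), T (i + 1) = ENNReal.ofReal ((p:ℝ) ^ ((m:ℝ) * α) * K) := by
      have h2 : ∀ i : ℕ, T (i+1) = ENNReal.ofReal ((p:ℝ) ^ ((m:ℝ) * α) * c i) := fun i => rfl
      rw [tsum_congr h2]
      rw [← ENNReal.ofReal_tsum_of_nonneg
        (fun i => mul_nonneg (Real.rpow_pos_of_pos hpR _).le (hcpos i))
        (hsum.mul_left _)]
      congr 1
      rw [tsum_mul_left]
    rw [h1]
    show ENNReal.ofReal ((p:ℝ) ^ ((m:ℝ) * α)) + ENNReal.ofReal ((p:ℝ) ^ ((m:ℝ) * α) * K)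
      ≤ ENNReal.ofReal ((p:ℝ) ^ ((m:ℝ) * α) * (1 + K))
    rw [← ENNReal.ofReal_add (Real.rpow_pos_of_pos hpR _).le
      (mul_nonneg (Real.rpow_pos_of_pos hpR _).le hK0)]
    exact le_of_eq (by congr 1; ring)
  have hfinal : ENNReal.ofReal ((p:ℝ) ^ ((m:ℝ) * α) * (1 + K))
      ≤ ENNReal.ofReal ((p:ℝ) ^ α * (1 + K) * t ^ (-α/β)) := by
    refine ENNReal.ofReal_le_ofReal ?_
    calc (p:ℝ) ^ ((m:ℝ) * α) * (1 + K) ≤ ((p:ℝ) ^ α * t ^ (-α/β)) * (1 + K) :=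
          mul_le_mul_of_nonneg_right hpmα (by linarith)
      _ = (p:ℝ) ^ α * (1 + K) * t ^ (-α/β) := by ring
  have hGle2 := le_trans hGle hfinal
  have hint : Integrable g μ := by
    refine ⟨hgcont.aestronglyMeasurable, ?_⟩
    rw [hasFiniteIntegral_iff_ofReal (ae_of_all _ hg0)]
    exact lt_of_le_of_lt hGle2 ENNReal.ofReal_lt_top
  refine ⟨hint, ?_⟩
  rw [integral_eq_lintegral_of_nonneg_ae (ae_of_all _ hg0) hgcont.aestronglyMeasurable]
  exact ENNReal.toReal_le_of_le_ofReal (by positivity) hGle2
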